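/- arXiv:1512.08341 — 2 statements merged into one kernel-verified Lean document; each statement's English description precedes it below -/
import Mathlib

section
/- Let a, b be integers, not both zero, and define a' = max(a + max(b,0), b) and b' = b - a - max(b,0). Then gcd(a', b') = gcd(a, b). -/
lemma gcd_aux (x y : ℤ) : Int.gcd x (y - x) = Int.gcd x y := by
  apply Nat.dvd_antisymm
  · apply Int.natCast_dvd_natCast.mp
    apply Int.dvd_coe_gcd (Int.gcd_dvd_left _ _)
    simpa using dvd_add (Int.gcd_dvd_right _ _ : (Int.gcd x (y-x) : ℤ) ∣ (y - x)) (Int.gcd_dvd_left _ _)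
  · apply Int.natCast_dvd_natCast.mp
    apply Int.dvd_coe_gcd (Int.gcd_dvd_left _ _)
    exact dvd_sub (Int.gcd_dvd_right _ _) (Int.gcd_dvd_left _ _)

lemma gcd_neg_right' (x y : ℤ) : Int.gcd x (-y) = Int.gcd x y := by
  simp [Int.gcd_def]

theorem stmt_1 (a b : ℤ) (h : ¬(a = 0 ∧ b = 0)) :
    Int.gcd (max (a + max b 0) b) (b - a - max b 0) = Int.gcd a b := by
  rcases le_total b 0 with hb | hb
  · rw [max_eq_right hb]
    rcases le_total b a with ha | ha
    · rw [add_zero, sub_zero, max_eq_left ha, gcd_aux]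
    · rw [add_zero, sub_zero, max_eq_right ha,
        show b - a = -(a - b) by ring, gcd_neg_right', gcd_aux, Int.gcd_comm]
  · rw [max_eq_left hb]
    rcases le_total 0 a with ha | ha
    · rw [max_eq_left (by linarith), show b - a - b = -a by ring, gcd_neg_right',
        Int.gcd_comm, ← gcd_aux a (a + b)]
      simp [Int.gcd_comm]
    · rw [max_eq_right (by linarith), show b - a - b = -a by ring, gcd_neg_right',
        Int.gcd_comm]
end

section
/- Let a, b be integers, not both zero, and define a'' = min(a - max(b,0), -b) and b'' = a + b - max(b,0). Then gcd(a'', b'') = gcd(a, b). -/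
private lemma gcd_add_self_right' (a b : ℤ) : Int.gcd a (b + a) = Int.gcd a b := by
  apply Nat.dvd_antisymm
  · rw [← Int.natCast_dvd_natCast]
    refine Int.dvd_coe_gcd (Int.gcd_dvd_left _ _) ?_
    have h1 : (Int.gcd a (b + a) : ℤ) ∣ a := Int.gcd_dvd_left _ _
    have h2 : (Int.gcd a (b + a) : ℤ) ∣ b + a := Int.gcd_dvd_right _ _
    simpa using h2.sub h1
  · rw [← Int.natCast_dvd_natCast]
    refine Int.dvd_coe_gcd (Int.gcd_dvd_left _ _) ?_
    exact (Int.gcd_dvd_right _ _).add (Int.gcd_dvd_left _ _)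

private lemma gcd_sub_right' (a b : ℤ) : Int.gcd a (b - a) = Int.gcd a b := by
  have := gcd_add_self_right' a (b - a)
  simpa using this.symm

private lemma gcd_neg_left' (a b : ℤ) : Int.gcd (-a) b = Int.gcd a b := by
  simp [Int.gcd, Int.natAbs_neg]

private lemma gcd_neg_right'_s3 (a b : ℤ) : Int.gcd a (-b) = Int.gcd a b := by
  simp [Int.gcd, Int.natAbs_neg]

theorem stmt_3 (a b : ℤ) (h : ¬(a = 0 ∧ b = 0)) :
    Int.gcd (min (a - max b 0) (-b)) (a + b - max b 0) = Int.gcd a b := by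
  rcases le_total b 0 with hb | hb
  · rw [max_eq_right hb, sub_zero, sub_zero]
    rcases le_total a (-b) with ha | ha
    · rw [min_eq_left ha, Int.gcd_comm a b]
      calc Int.gcd a (a + b) = Int.gcd a (b + a) := by rw [add_comm]
        _ = Int.gcd a b := gcd_add_self_right' a b
        _ = Int.gcd b a := Int.gcd_comm a b
    · rw [min_eq_right ha, gcd_neg_left']
      calc Int.gcd b (a + b) = Int.gcd b a := gcd_add_self_right' b a
        _ = Int.gcd a b := Int.gcd_comm _ _
  · rw [max_eq_left hb, show a + b - b = a by ring]
    rcases le_total a 0 with ha | ha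
    · rw [min_eq_left (by linarith), Int.gcd_comm, show a - b = -(b - a) by ring,
        gcd_neg_right'_s3, gcd_sub_right' a b]
    · rw [min_eq_right (by linarith), gcd_neg_left', Int.gcd_comm]
end
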